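/- Let X be a real random variable with Gaussian law of mean m ∈ ℝ and variance v > 0, and let g(y) = E[(X − y)² | X > y]. Then g(y) → 0 as y → +∞. -/

import Mathlib

open MeasureTheory ProbabilityTheory Set Filter Real
open scoped NNReal

lemma aux_pdf_ratio (m : ℝ) (v : ℝ≥0) (hv : 0 < (v:ℝ)) (y x : ℝ) :
    gaussianPDFReal m v x ≤ gaussianPDFReal m v y * rexp (-((y - m)/v) * (x - y)) := by
  unfold gaussianPDFReal
  have h : rexp (-(x - m) ^ 2 / (2 * v)) ≤
      rexp (-(y - m) ^ 2 / (2 * v) + -((y - m)/v) * (x - y)) := by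
    apply Real.exp_le_exp.2
    rw [div_le_iff₀ (by positivity)] at *
    have : (-((y-m)^2) / (2*v) + -((y-m)/v) * (x-y)) * (2*v)
        = -(y-m)^2 - 2*(y-m)*(x-y) := by field_simp; ring
    rw [this]
    nlinarith [sq_nonneg (x - y)]
  calc (√(2 * π * v))⁻¹ * rexp (-(x - m) ^ 2 / (2 * ↑v))
      ≤ (√(2 * π * v))⁻¹ * rexp (-(y - m) ^ 2 / (2 * ↑v) + -((y - m)/↑v) * (x - y)) := by
        exact mul_le_mul_of_nonneg_left h (by positivity)
    _ = _ := by rw [Real.exp_add]; ring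

lemma aux_pdf_anti (m : ℝ) (v : ℝ≥0) (x z : ℝ) (hx : m ≤ x) (hxz : x ≤ z) :
    gaussianPDFReal m v z ≤ gaussianPDFReal m v x := by
  by_cases hv : (v:ℝ) = 0
  · unfold gaussianPDFReal
    rw [show (2:ℝ) * π * v = 0 by rw [hv]; ring]
    simp
  have hv' : 0 < (v:ℝ) := lt_of_le_of_ne v.2 (Ne.symm hv)
  unfold gaussianPDFReal
  apply mul_le_mul_of_nonneg_left _ (by positivity)
  apply Real.exp_le_exp.2
  apply div_le_div_of_nonneg_right _ (by positivity)
  exact neg_le_neg (by nlinarith)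

lemma aux_shift_indicator (F : ℝ → ℝ) (y x : ℝ) :
    (Ioi y).indicator (fun x => F (x - y)) x = (Ioi 0).indicator F (x - y) := by
  unfold indicator
  by_cases h : y < x
  · simp [mem_Ioi, h, sub_pos.2 h]
  · simp [mem_Ioi, h, fun hc => h (sub_pos.1 hc)]

lemma aux_shift_integral (F : ℝ → ℝ) (y : ℝ) :
    ∫ x in Ioi y, F (x - y) = ∫ s in Ioi (0:ℝ), F s := by
  rw [← integral_indicator measurableSet_Ioi, ← integral_indicator measurableSet_Ioi,
    show ((Ioi y).indicator fun x => F (x - y)) = fun x => (Ioi 0).indicator F (x - y) from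
      funext (aux_shift_indicator F y)]
  exact integral_sub_right_eq_self (fun s => (Ioi (0:ℝ)).indicator F s) y

lemma aux_shift_integrable {F : ℝ → ℝ} (hF : IntegrableOn F (Ioi (0:ℝ))) (y : ℝ) :
    IntegrableOn (fun x => F (x - y)) (Ioi y) := by
  rw [← integrable_indicator_iff measurableSet_Ioi] at *
  rw [show ((Ioi y).indicator fun x => F (x - y)) = fun x => (Ioi 0).indicator F (x - y) from
      funext (aux_shift_indicator F y)]
  exact hF.comp_sub_right y

lemma aux_int_sq_exp (a : ℝ) (ha : 0 < a) :
    ∫ s in Ioi (0:ℝ), s ^ 2 * rexp (-a * s) = 2 / a ^ 3 := by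
  have h := Real.integral_rpow_mul_exp_neg_mul_Ioi (a := 3) (r := a) (by norm_num) ha
  rw [show ((3:ℝ) - 1) = ((2:ℕ):ℝ) by norm_num] at h
  have h2 : ∀ s ∈ Ioi (0:ℝ), s ^ ((2:ℕ):ℝ) * rexp (-(a * s)) = s ^ 2 * rexp (-a * s) := by
    intro s hs
    rw [Real.rpow_natCast, neg_mul]
  rw [setIntegral_congr_fun measurableSet_Ioi h2] at h
  have h3 : Real.Gamma 3 = 2 := by
    rw [show (3:ℝ) = (2:ℕ) + 1 by norm_num, Real.Gamma_nat_eq_factorial]; norm_num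
  rw [h, h3, show ((3:ℝ)) = ((3:ℕ):ℝ) by norm_num, Real.rpow_natCast]
  field_simp


lemma aux_integrableOn_sq_exp (a : ℝ) (ha : 0 < a) :
    IntegrableOn (fun s : ℝ => s ^ 2 * rexp (-a * s)) (Ioi (0:ℝ)) := by
  apply integrable_of_isBigO_exp_neg (b := a / 2) (by positivity)
    (Continuous.continuousOn (by continuity))
  have ht : Tendsto (fun s : ℝ => s ^ 2 * rexp (-a * s) / rexp (-(a/2) * s)) atTop (nhds 0) := by
    have : ∀ s : ℝ, s ^ 2 * rexp (-a * s) / rexp (-(a/2) * s)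
        = (2/a) ^ 2 * (((a/2) * s) ^ 2 * rexp (-((a/2) * s))) := by
      intro s
      rw [mul_div_assoc, ← Real.exp_sub, show -a*s - -(a/2)*s = -(a/2*s) by ring]
      field_simp
    simp_rw [this]
    rw [show (0:ℝ) = (2/a)^2 * 0 by ring]
    apply Tendsto.const_mul
    have := (tendsto_pow_mul_exp_neg_atTop_nhds_zero 2).comp
      (Tendsto.const_mul_atTop (by positivity : (0:ℝ) < a/2) tendsto_id)
    simpa [Function.comp_def] using this
  have := Asymptotics.isLittleO_of_tendsto (fun s hs => absurd hs (Real.exp_ne_zero _)) ht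
  exact this.isBigO

lemma aux_pdf_lb (m : ℝ) (v : ℝ≥0) (hv : 0 < (v:ℝ)) (y d : ℝ)
    (h : (y + d - m) ^ 2 ≤ (y - m) ^ 2 + 3 * v) :
    gaussianPDFReal m v y * rexp (-(3/2:ℝ)) ≤ gaussianPDFReal m v (y + d) := by
  unfold gaussianPDFReal
  have h2v : (0:ℝ) < 2 * v := by positivity
  have hexp : -(y - m) ^ 2 / (2 * v) + -(3/2 : ℝ) ≤ -(y + d - m) ^ 2 / (2 * v) := by
    have heq : -(y - m) ^ 2 / (2 * v) + -(3/2 : ℝ) = (-(y - m) ^ 2 - 3 * v) / (2 * v) := by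
      field_simp; ring
    rw [heq, div_le_div_iff₀ h2v h2v]
    nlinarith [h, h2v]
  calc (√(2 * π * v))⁻¹ * rexp (-(y - m) ^ 2 / (2 * v)) * rexp (-(3/2 : ℝ))
      = (√(2 * π * v))⁻¹ * rexp (-(y - m) ^ 2 / (2 * v) + -(3/2 : ℝ)) := by
        rw [Real.exp_add]; ring
    _ ≤ (√(2 * π * v))⁻¹ * rexp (-(y + d - m) ^ 2 / (2 * v)) :=
        mul_le_mul_of_nonneg_left (Real.exp_le_exp.2 hexp) (by positivity)

lemma aux_sq_bound (t d w : ℝ) (h : d * t = w) (h2 : w ≤ t ^ 2) (h3 : 0 ≤ d) (h4 : 0 < t) :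
    (t + d) ^ 2 ≤ t ^ 2 + 3 * w := by nlinarith

lemma aux_ratio_calc (c E t w : ℝ) (hc : c ≠ 0) (hE : 0 < E) (ht : 0 < t) (hw : 0 < w) :
    (c * (2 / (t / w) ^ 3)) / (c * E⁻¹ * (w / t)) = 2 * E * w ^ 2 / t ^ 2 := by
  field_simp

theorem gaussian_undersupply_penalty_tendsto_zero {Ω : Type*} [MeasureSpace Ω]
    (P : Measure Ω) [IsProbabilityMeasure P]
    (X : Ω → ℝ) (hX : Measurable X) (m : ℝ) (v : ℝ≥0) (hv : 0 < v)
    (hlaw : Measure.map X P = gaussianReal m v)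
    (g : ℝ → ℝ)
    (hg : ∀ y, g y =
      (∫ ω in {ω | y < X ω}, (X ω - y) ^ 2 ∂P) / (P {ω | y < X ω}).toReal) :
    Tendsto g atTop (nhds 0) := by
  have hvne : v ≠ 0 := hv.ne'
  have hvpos : (0:ℝ) < v := hv
  set f := gaussianPDFReal m v with hfdef
  have hfm : Measurable f := measurable_gaussianPDFReal m v
  have hfnn : ∀ x, 0 ≤ f x := gaussianPDFReal_nonneg m v
  have hfpos : ∀ x, 0 < f x := fun x => gaussianPDFReal_pos m v x hvne
  have hfint : Integrable f := integrable_gaussianPDFReal m v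
  have hrepr : ∀ y, g y = (∫ x in Ioi y, (x - y) ^ 2 * f x) / (∫ x in Ioi y, f x) := by
    intro y
    rw [hg y]
    have hset : {ω | y < X ω} = X ⁻¹' (Ioi y) := rfl
    have hP : P {ω | y < X ω} = ENNReal.ofReal (∫ x in Ioi y, f x) := by
      rw [hset, ← Measure.map_apply hX measurableSet_Ioi, hlaw,
        gaussianReal_apply_eq_integral _ hvne _]
    have hmeas : AEStronglyMeasurable (fun x : ℝ => (x - y) ^ 2) (Measure.map X P) :=
      Measurable.aestronglyMeasurable (by measurability)
    have hI' := setIntegral_map (μ := P) (g := X) (s := Ioi y) (f := fun x : ℝ => (x - y) ^ 2)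
      measurableSet_Ioi hmeas hX.aemeasurable
    rw [hlaw, gaussianReal_of_var_ne_zero _ hvne,
      show gaussianPDF m v = (fun x => ((Real.toNNReal (f x) : ℝ≥0) : ENNReal)) from rfl,
      setIntegral_withDensity_eq_setIntegral_smul hfm.real_toNNReal _ measurableSet_Ioi] at hI'
    have hI : (∫ ω in {ω | y < X ω}, (X ω - y) ^ 2 ∂P) = ∫ x in Ioi y, (x - y) ^ 2 * f x := by
      rw [hset, ← hI']
      refine setIntegral_congr_fun measurableSet_Ioi (fun x _ => ?_)
      rw [NNReal.smul_def, Real.coe_toNNReal _ (hfnn x), smul_eq_mul]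
      ring
    rw [hP, hI, ENNReal.toReal_ofReal (integral_nonneg (fun x => hfnn x))]
  -- key quantitative bound
  have key : ∀ y, m + Real.sqrt v ≤ y → g y ≤ 2 * rexp (3/2) * (v:ℝ)^2 / (y - m)^2 := by
    intro y hy
    have hsv : 0 < Real.sqrt v := Real.sqrt_pos.2 hvpos
    set t := y - m with htdef
    have ht : Real.sqrt v ≤ t := by rw [htdef]; linarith
    have htpos : 0 < t := lt_of_lt_of_le hsv ht
    have htsq : (v:ℝ) ≤ t ^ 2 := by nlinarith [Real.sq_sqrt hvpos.le]
    set a := t / v with hadef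
    have ha : 0 < a := div_pos htpos hvpos
    have hmy : m ≤ y := by nlinarith
    -- numerator bound
    have hGint : IntegrableOn (fun x => (x - y) ^ 2 * rexp (-a * (x - y))) (Ioi y) := by
      have := aux_shift_integrable (aux_integrableOn_sq_exp a ha) y
      simpa using this
    have hbound : ∀ x ∈ Ioi y, (x - y) ^ 2 * f x
        ≤ f y * ((x - y) ^ 2 * rexp (-a * (x - y))) := by
      intro x _
      have h1 : f x ≤ f y * rexp (-a * (x - y)) := by
        have := aux_pdf_ratio m v hvpos y x
        rw [hadef, htdef]
        exact this
      nlinarith [sq_nonneg (x - y), mul_le_mul_of_nonneg_left h1 (sq_nonneg (x - y))]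
    have hshift : (∫ x in Ioi y, (x - y) ^ 2 * rexp (-a * (x - y)))
        = ∫ s in Ioi (0:ℝ), s ^ 2 * rexp (-a * s) := by
      have := aux_shift_integral (fun s => s ^ 2 * rexp (-a * s)) y
      simpa using this
    have hInt1 : IntegrableOn (fun x => (x - y) ^ 2 * f x) (Ioi y) := by
      refine Integrable.mono' (hGint.const_mul (f y)) ?_ ?_
      · exact Measurable.aestronglyMeasurable (by measurability)
      · refine (ae_restrict_iff' measurableSet_Ioi).2 (ae_of_all _ fun x hx => ?_)
        rw [Real.norm_eq_abs, abs_of_nonneg (mul_nonneg (sq_nonneg _) (hfnn x))]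
        exact hbound x hx
    have hN : (∫ x in Ioi y, (x - y) ^ 2 * f x) ≤ f y * (2 / a ^ 3) := by
      calc (∫ x in Ioi y, (x - y) ^ 2 * f x)
          ≤ ∫ x in Ioi y, f y * ((x - y) ^ 2 * rexp (-a * (x - y))) :=
            setIntegral_mono_on hInt1 (hGint.const_mul (f y)) measurableSet_Ioi hbound
        _ = f y * ∫ x in Ioi y, (x - y) ^ 2 * rexp (-a * (x - y)) := integral_const_mul _ _
        _ = f y * (2 / a ^ 3) := by rw [hshift, aux_int_sq_exp a ha]
    -- denominator bound
    set δ := (v:ℝ) / t with hδdef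
    have hδpos : 0 < δ := div_pos hvpos htpos
    have hδt : δ * t = v := div_mul_cancel₀ _ htpos.ne'
    have hfd : f y * rexp (-(3/2 : ℝ)) ≤ f (y + δ) := by
      refine aux_pdf_lb m v hvpos y δ ?_
      have h1 : y + δ - m = t + δ := by rw [htdef]; ring
      have h2 : y - m = t := htdef.symm
      rw [h1, h2]
      exact aux_sq_bound t δ v hδt htsq hδpos.le htpos
    have hDlb : f y * rexp (-(3/2 : ℝ)) * δ ≤ ∫ x in Ioi y, f x := by
      have hvol : (volume (Ioc y (y + δ))).toReal = δ := by
        rw [Real.volume_Ioc, ENNReal.toReal_ofReal (by linarith)]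
        ring
      calc f y * rexp (-(3/2 : ℝ)) * δ
          = ∫ _ in Ioc y (y + δ), f y * rexp (-(3/2 : ℝ)) := by
            rw [setIntegral_const, measureReal_def, hvol, smul_eq_mul]; ring
        _ ≤ ∫ x in Ioc y (y + δ), f x := by
            refine setIntegral_mono_on ?_ hfint.integrableOn measurableSet_Ioc ?_
            · exact integrableOn_const (by rw [Real.volume_Ioc]; exact ENNReal.ofReal_ne_top)
            · intro x hx
              refine le_trans hfd (aux_pdf_anti m v x (y + δ) ?_ hx.2)
              exact le_trans hmy hx.1.le
        _ ≤ ∫ x in Ioi y, f x :=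
            setIntegral_mono_set hfint.integrableOn (ae_of_all _ fun x => hfnn x)
              (HasSubset.Subset.eventuallyLE Ioc_subset_Ioi_self)
    have hLBpos : 0 < f y * rexp (-(3/2 : ℝ)) * δ := mul_pos (mul_pos (hfpos y) (Real.exp_pos _)) hδpos
    have hUBnn : 0 ≤ f y * (2 / a ^ 3) := mul_nonneg (hfnn y) (by positivity)
    rw [hrepr y]
    calc (∫ x in Ioi y, (x - y) ^ 2 * f x) / (∫ x in Ioi y, f x)
        ≤ (f y * (2 / a ^ 3)) / (f y * rexp (-(3/2 : ℝ)) * δ) :=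
          div_le_div₀ hUBnn hN hLBpos hDlb
      _ = 2 * rexp (3/2) * (v:ℝ)^2 / t ^ 2 := by
          rw [hadef, hδdef, Real.exp_neg]
          exact aux_ratio_calc (f y) (rexp (3/2 : ℝ)) t v (hfpos y).ne' (Real.exp_pos _)
            htpos hvpos
  -- squeeze
  have h0 : ∀ y, 0 ≤ g y := by
    intro y
    rw [hrepr y]
    exact div_nonneg (setIntegral_nonneg measurableSet_Ioi fun x _ =>
      mul_nonneg (sq_nonneg _) (hfnn x))
      (setIntegral_nonneg measurableSet_Ioi fun x _ => hfnn x)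
  have hupper : Tendsto (fun y => 2 * rexp (3/2) * (v:ℝ)^2 / (y - m)^2) atTop (nhds 0) := by
    apply Tendsto.div_atTop tendsto_const_nhds
    have h1 : Tendsto (fun y : ℝ => y - m) atTop atTop := tendsto_atTop_add_const_right _ (-m)
      (by exact tendsto_id)
    exact (tendsto_pow_atTop two_ne_zero).comp h1
  refine tendsto_of_tendsto_of_tendsto_of_le_of_le' tendsto_const_nhds hupper
    (Eventually.of_forall h0) ?_
  filter_upwards [eventually_ge_atTop (m + Real.sqrt v)] with y hy
  exact key y hy
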